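/- Let f : ℝ^m → ℝ be convex with L-Lipschitz gradient and g the indicator function of {μ : μ ≥ 0}. For ζ ∈ ℝ^m define p_L(ζ) = argmin_μ [g(μ) + (L/2)‖μ - (ζ - (1/L)∇f(ζ))‖²], which equals the componentwise maximum max{0, ζ - (1/L)∇f(ζ)}. Then for any feasible x ≥ 0: (2/L)·(F(x) - F(p_L(ζ))) ≥ ‖p_L(ζ) - ζ‖² + 2⟨p_L(ζ) - ζ, ζ - x⟩, where F = f + g. -/

import Mathlib

open scoped RealInnerProductSpace

open InnerProductSpace

variable {E : Type*} [NormedAddCommGroup E] [InnerProductSpace ℝ E] [CompleteSpace E]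

lemma curve_hasDerivAt {f : E → ℝ} {f' : E → E} (hgrad : ∀ x, HasGradientAt f (f' x) x)
    (a d : E) (t : ℝ) :
    HasDerivAt (fun s : ℝ => f (a + s • d)) ⟪f' (a + t • d), d⟫ t := by
  have h1 : HasDerivAt (fun s : ℝ => a + s • d) d t := by
    simpa using ((hasDerivAt_id t).smul_const d).const_add a
  have h2 := (hgrad (a + t • d)).hasFDerivAt.comp_hasDerivAt t h1
  simp at h2
  exact h2

lemma convex_first_order {f : E → ℝ} {f' : E → E}
    (hconv : ConvexOn ℝ Set.univ f) (hgrad : ∀ x, HasGradientAt f (f' x) x)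
    (a b : E) : f a + ⟪f' a, b - a⟫ ≤ f b := by
  have hd := curve_hasDerivAt hgrad a (b - a) 0
  rw [hasDerivAt_iff_tendsto_slope] at hd
  have hmono : Filter.Tendsto (slope (fun s : ℝ => f (a + s • (b - a))) 0)
      (nhdsWithin 0 (Set.Ioi 0)) (nhds ⟪f' (a + (0:ℝ) • (b - a)), b - a⟫) :=
    hd.mono_left (nhdsWithin_mono 0 (fun t ht => ne_of_gt ht))
  have hle : ⟪f' (a + (0:ℝ) • (b - a)), b - a⟫ ≤ f b - f a := by
    refine le_of_tendsto hmono ?_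
    filter_upwards [Ioo_mem_nhdsGT_of_mem (Set.mem_Ico.mpr ⟨le_refl (0:ℝ), one_pos⟩)]
      with t ht
    obtain ⟨ht0, ht1⟩ := ht
    have hcomb := hconv.2 (Set.mem_univ a) (Set.mem_univ b)
      (by linarith : (0:ℝ) ≤ 1 - t) ht0.le (by ring)
    have heq : a + t • (b - a) = (1 - t) • a + t • b := by
      rw [smul_sub, sub_smul, one_smul]; abel
    have hft : f (a + t • (b - a)) ≤ (1 - t) * f a + t * f b := by
      rw [heq]; simpa using hcomb
    have hphi0 : f (a + (0:ℝ) • (b - a)) = f a := by simp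
    rw [slope_def_field, hphi0, sub_zero, div_le_iff₀ ht0]
    nlinarith [hft]
  simp only [zero_smul, add_zero] at hle
  linarith

lemma descent_lemma {f : E → ℝ} {f' : E → E} (hgrad : ∀ x, HasGradientAt f (f' x) x)
    {L : ℝ} (hL : 0 < L) (hlip : ∀ x y, ‖f' x - f' y‖ ≤ L * ‖x - y‖)
    (a b : E) : f b ≤ f a + ⟪f' a, b - a⟫ + L / 2 * ‖b - a‖ ^ 2 := by
  set d := b - a with hd
  set ψ : ℝ → ℝ := fun t => f (a + t • d) - t * ⟪f' a, d⟫ - L / 2 * t ^ 2 * ‖d‖ ^ 2 with hψ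
  have hderiv : ∀ t : ℝ, HasDerivAt ψ
      (⟪f' (a + t • d), d⟫ - ⟪f' a, d⟫ - L * t * ‖d‖ ^ 2) t := by
    intro t
    have h1 := curve_hasDerivAt hgrad a d t
    have h2 : HasDerivAt (fun s : ℝ => s * ⟪f' a, d⟫) ⟪f' a, d⟫ t := by
      simpa using (hasDerivAt_id t).mul_const ⟪f' a, d⟫
    have h3 : HasDerivAt (fun s : ℝ => L / 2 * s ^ 2 * ‖d‖ ^ 2) (L * t * ‖d‖ ^ 2) t := by
      have := ((hasDerivAt_pow 2 t).const_mul (L / 2)).mul_const (‖d‖ ^ 2)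
      have e : L * t * ‖d‖ ^ 2 = L / 2 * ((2:ℕ) * t ^ (2 - 1)) * ‖d‖ ^ 2 := by norm_num only [Nat.cast_ofNat, pow_one]; ring
      rw [e]
      exact this
    have h4 := (h1.sub h2).sub h3
    exact h4
  have hanti : AntitoneOn ψ (Set.Icc 0 1) := by
    have hdiff : Differentiable ℝ ψ := fun t => (hderiv t).differentiableAt
    apply antitoneOn_of_deriv_nonpos (convex_Icc 0 1) hdiff.continuous.continuousOn
      hdiff.differentiableOn
    · intro t ht
      rw [interior_Icc] at ht
      rw [(hderiv t).deriv]
      have h4 : ⟪f' (a + t • d) - f' a, d⟫ ≤ ‖f' (a + t • d) - f' a‖ * ‖d‖ :=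
        real_inner_le_norm _ _
      have h5 : ‖f' (a + t • d) - f' a‖ ≤ L * ‖t • d‖ := by
        simpa using hlip (a + t • d) a
      have h6 : ‖t • d‖ = t * ‖d‖ := by
        rw [norm_smul, Real.norm_eq_abs, abs_of_pos ht.1]
      rw [inner_sub_left] at h4
      rw [h6] at h5
      have h7 : ‖f' (a + t • d) - f' a‖ * ‖d‖ ≤ L * (t * ‖d‖) * ‖d‖ :=
        mul_le_mul_of_nonneg_right h5 (norm_nonneg d)
      have h8 : L * (t * ‖d‖) * ‖d‖ = L * t * ‖d‖ ^ 2 := by ring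
      linarith
  have := hanti (Set.left_mem_Icc.mpr zero_le_one) (Set.right_mem_Icc.mpr zero_le_one)
    zero_le_one
  simp only [hψ] at this
  simp only [zero_smul, add_zero, one_smul, zero_mul, one_mul, one_pow] at this
  have hb : a + d = b := by rw [hd]; abel
  rw [hb] at this
  linarith

/-- Beck–Teboulle Lemma 2.3 specialized to the nonnegative orthant: for convex
`f` with `L`-Lipschitz gradient, `ζ ∈ ℝᵐ`, and
`p_L(ζ) = max{0, ζ - (1/L)∇f(ζ)}` (the prox/projection step, which minimizes
`μ ↦ (L/2)‖μ - (ζ - (1/L)∇f(ζ))‖²` over `{μ ≥ 0}`), every feasible `x ≥ 0`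
satisfies `(2/L)(F(x) - F(p_L ζ)) ≥ ‖p_L ζ - ζ‖² + 2⟨p_L ζ - ζ, ζ - x⟩`, where
`F = f` on the feasible set. -/
theorem prox_grad_descent_inequality (m : ℕ)
    (f : EuclideanSpace ℝ (Fin m) → ℝ) (f' : EuclideanSpace ℝ (Fin m) → EuclideanSpace ℝ (Fin m))
    (hconv : ConvexOn ℝ Set.univ f)
    (hgrad : ∀ x, HasGradientAt f (f' x) x)
    (L : ℝ) (hL : 0 < L)
    (hlip : ∀ x y, ‖f' x - f' y‖ ≤ L * ‖x - y‖)
    (ζ : EuclideanSpace ℝ (Fin m))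
    (pLζ : EuclideanSpace ℝ (Fin m))
    (hpL : ∀ i, pLζ i = max 0 (ζ i - (1 / L) * f' ζ i)) :
    ((∀ i, 0 ≤ pLζ i) ∧
      ∀ μ : EuclideanSpace ℝ (Fin m), (∀ i, 0 ≤ μ i) →
        (L / 2) * ‖pLζ - (ζ - (1 / L) • f' ζ)‖ ^ 2
          ≤ (L / 2) * ‖μ - (ζ - (1 / L) • f' ζ)‖ ^ 2) ∧
    ∀ x : EuclideanSpace ℝ (Fin m), (∀ i, 0 ≤ x i) →
      (2 / L) * (f x - f pLζ) ≥ ‖pLζ - ζ‖ ^ 2 + 2 * ⟪pLζ - ζ, ζ - x⟫ := by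
  have hv : ∀ i, (ζ - (1 / L) • f' ζ : EuclideanSpace ℝ (Fin m)) i
      = ζ i - (1 / L) * f' ζ i := by
    intro i
    simp [PiLp.sub_apply, PiLp.smul_apply, smul_eq_mul]
  have hns : ∀ y : EuclideanSpace ℝ (Fin m), ‖y‖ ^ 2 = ∑ i, (y i) ^ 2 := by
    intro y
    rw [EuclideanSpace.norm_eq, Real.sq_sqrt (Finset.sum_nonneg fun i _ => sq_nonneg _)]
    simp [Real.norm_eq_abs, sq_abs]
  refine ⟨⟨?_, ?_⟩, ?_⟩
  · intro i; rw [hpL i]; exact le_max_left _ _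
  · intro μ hμ
    apply mul_le_mul_of_nonneg_left _ (by positivity : (0:ℝ) ≤ L / 2)
    rw [hns, hns]
    apply Finset.sum_le_sum
    intro i _
    have h1 : (pLζ - (ζ - (1 / L) • f' ζ) : EuclideanSpace ℝ (Fin m)) i
        = max 0 (ζ i - (1 / L) * f' ζ i) - (ζ i - (1 / L) * f' ζ i) := by
      rw [PiLp.sub_apply, hpL i, hv i]
    have h2 : (μ - (ζ - (1 / L) • f' ζ) : EuclideanSpace ℝ (Fin m)) i
        = μ i - (ζ i - (1 / L) * f' ζ i) := by rw [PiLp.sub_apply, hv i]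
    rw [h1, h2]
    rcases le_or_gt 0 (ζ i - (1 / L) * f' ζ i) with h | h
    · rw [max_eq_right h]; simpa using sq_nonneg (μ i - (ζ i - (1 / L) * f' ζ i))
    · rw [max_eq_left h.le]
      have := hμ i
      nlinarith
  · intro x hx
    have hB := convex_first_order hconv hgrad ζ x
    have hC := descent_lemma hgrad hL hlip ζ pLζ
    have hProx : ⟪(ζ - (1 / L) • f' ζ) - pLζ, x - pLζ⟫ ≤ 0 := by
      rw [PiLp.inner_apply]
      apply Finset.sum_nonpos
      intro i _
      simp only [RCLike.inner_apply, conj_trivial, PiLp.sub_apply]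
      have hsm : ((1 / L) • f' ζ : EuclideanSpace ℝ (Fin m)) i = (1 / L) * f' ζ i := rfl
      rw [hsm, hpL i]
      rcases le_or_gt 0 (ζ i - (1 / L) * f' ζ i) with h | h
      · rw [max_eq_right h]; simp
      · rw [max_eq_left h.le]
        have := hx i
        simp only [sub_zero]
        exact mul_nonpos_of_nonneg_of_nonpos this h.le
    have hexp : ⟪(ζ - (1 / L) • f' ζ) - pLζ, x - pLζ⟫
        = ‖pLζ - ζ‖ ^ 2 - ⟪pLζ - ζ, x - ζ⟫ - (1 / L) * ⟪f' ζ, x - ζ⟫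
          + (1 / L) * ⟪f' ζ, pLζ - ζ⟫ := by
      have h1 : (ζ - (1 / L) • f' ζ) - pLζ = (-(pLζ - ζ)) - (1 / L) • f' ζ := by abel
      have h2 : x - pLζ = (x - ζ) - (pLζ - ζ) := by abel
      rw [h1, h2]
      generalize pLζ - ζ = u
      generalize x - ζ = w
      simp only [inner_sub_left, inner_sub_right, inner_neg_left, real_inner_smul_left,
        real_inner_self_eq_norm_sq]
      ring
    rw [hexp] at hProx
    have hgoal : ⟪pLζ - ζ, ζ - x⟫ = -⟪pLζ - ζ, x - ζ⟫ := by
      have : ζ - x = -(x - ζ) := by abel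
      rw [this, inner_neg_right]
    have hP3 : L * (‖pLζ - ζ‖ ^ 2 - ⟪pLζ - ζ, x - ζ⟫ - (1 / L) * ⟪f' ζ, x - ζ⟫
        + (1 / L) * ⟪f' ζ, pLζ - ζ⟫) ≤ 0 := mul_nonpos_of_nonneg_of_nonpos hL.le hProx
    have e : L * (‖pLζ - ζ‖ ^ 2 - ⟪pLζ - ζ, x - ζ⟫ - (1 / L) * ⟪f' ζ, x - ζ⟫
        + (1 / L) * ⟪f' ζ, pLζ - ζ⟫)
        = L * ‖pLζ - ζ‖ ^ 2 - L * ⟪pLζ - ζ, x - ζ⟫ - ⟪f' ζ, x - ζ⟫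
          + ⟪f' ζ, pLζ - ζ⟫ := by
      field_simp
    rw [e] at hP3
    have key : L * ‖pLζ - ζ‖ ^ 2 - 2 * (L * ⟪pLζ - ζ, x - ζ⟫) ≤ 2 * (f x - f pLζ) := by
      nlinarith [hB, hC, hP3]
    rw [ge_iff_le, hgoal, div_mul_eq_mul_div, le_div_iff₀ hL]
    nlinarith [key]
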